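/- Let (M,ρ,μ) be an unbounded metric measure space with the isoperimetric property (I) with constants C > 0 and κ₀ > 0. Then the volume of balls grows at least exponentially: there exist η > 1 and c > 0 such that for a fixed reference point o and all sufficiently large r, μ(B(o,r)) ≥ c·η^{r/κ₀}. -/

import Mathlib

open MeasureTheory Metric Set

/-- In an unbounded metric measure space with the isoperimetric
property (I) (constants `C > 0`, `κ₀ > 0`), the volume of balls grows at least
exponentially: for any reference point `o` there are `η > 1`, `c > 0` and `R` such that
`μ(B(o,r)) ≥ c·η^(r/κ₀)` for all `r ≥ R`. -/
theorem volume_growth_exponential_of_isoperimetric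
    {M : Type*} [MetricSpace M] [MeasurableSpace M] [BorelSpace M]
    (μ : Measure M)
    (hpos : μ Set.univ ≠ 0)
    (hballs : ∀ (x : M) (r : ℝ), μ (Metric.ball x r) < ⊤)
    (hunb : ¬ Bornology.IsBounded (Set.univ : Set M))
    (κ₀ C : ℝ) (hκ₀ : 0 < κ₀) (hC : 0 < C)
    (hI : ∀ A : Set M, IsOpen A → Bornology.IsBounded A →
      ∀ κ : ℝ, 0 < κ → κ ≤ κ₀ →
        ENNReal.ofReal (C * κ) * μ A ≤ μ {x | x ∈ A ∧ Metric.infDist x Aᶜ ≤ κ}) :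
    ∀ o : M, ∃ η : ℝ, 1 < η ∧ ∃ c : ℝ, 0 < c ∧ ∃ R : ℝ, ∀ r : ℝ, R ≤ r →
      ENNReal.ofReal (c * η ^ (r / κ₀)) ≤ μ (Metric.ball o r) := by
  intro o
  -- complement of any ball is nonempty
  have hcompl : ∀ r : ℝ, ((Metric.ball o r)ᶜ : Set M).Nonempty := by
    intro r
    by_contra h
    rw [Set.not_nonempty_iff_eq_empty, Set.compl_empty_iff] at h
    exact hunb (h ▸ Metric.isBounded_ball)
  set κ : ℝ := min (κ₀ / 2) (1 / (2 * C)) with hκdef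
  have hκpos : 0 < κ := lt_min (by positivity) (by positivity)
  have hκlt : κ < κ₀ := lt_of_le_of_lt (min_le_left _ _) (by linarith)
  have hκle : κ ≤ κ₀ := hκlt.le
  have hCκ : C * κ ≤ 1 / 2 := by
    have h1 : κ ≤ 1 / (2 * C) := min_le_right _ _
    have h2 : C * κ ≤ C * (1 / (2 * C)) := by nlinarith
    calc C * κ ≤ C * (1 / (2 * C)) := h2
      _ = 1 / 2 := by field_simp
  have hCκpos : 0 < C * κ := by positivity
  -- the step inequality
  have hstep : ∀ r : ℝ,
      (μ (Metric.ball o (r - κ₀))).toReal ≤ (1 - C * κ) * (μ (Metric.ball o r)).toReal := by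
    intro r
    set A : Set M := Metric.ball o r with hA
    set L : Set M := {x | x ∈ A ∧ Metric.infDist x Aᶜ ≤ κ} with hL
    have hLmeas : MeasurableSet L := by
      have : L = A ∩ {x | Metric.infDist x Aᶜ ≤ κ} := rfl
      rw [this]
      exact measurableSet_ball.inter
        ((isClosed_le (Metric.continuous_infDist_pt _) continuous_const).measurableSet)
    have hdisj : Disjoint L (Metric.ball o (r - κ₀)) := by
      rw [Set.disjoint_left]
      rintro x ⟨hxA, hxd⟩ hx'
      have hx' : dist x o < r - κ₀ := mem_ball.mp hx'
      have : κ₀ ≤ Metric.infDist x Aᶜ := by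
        by_contra hcon
        rw [not_le, Metric.infDist_lt_iff (hcompl r)] at hcon
        obtain ⟨y, hy, hxy⟩ := hcon
        have hyo : r ≤ dist y o := by
          by_contra hc
          exact hy (mem_ball.mpr (lt_of_not_ge hc))
        have h8 := dist_triangle y x o
        rw [dist_comm y x] at h8
        linarith
      linarith
    have hsub : L ∪ Metric.ball o (r - κ₀) ⊆ A := by
      rintro x (hx | hx)
      · exact hx.1
      · exact mem_ball.mpr (lt_of_lt_of_le (mem_ball.mp hx) (by linarith))
    have hIb := hI A Metric.isOpen_ball Metric.isBounded_ball κ hκpos hκle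
    have hkey : ENNReal.ofReal (C * κ) * μ A + μ (Metric.ball o (r - κ₀)) ≤ μ A := by
      calc ENNReal.ofReal (C * κ) * μ A + μ (Metric.ball o (r - κ₀))
          ≤ μ L + μ (Metric.ball o (r - κ₀)) := by exact add_le_add_left hIb _
        _ = μ (L ∪ Metric.ball o (r - κ₀)) := (measure_union hdisj measurableSet_ball).symm
        _ ≤ μ A := measure_mono hsub
    have hAfin : μ A ≠ ⊤ := (hballs o r).ne
    have hBfin : μ (Metric.ball o (r - κ₀)) ≠ ⊤ := (hballs o _).ne
    have hkeyR := ENNReal.toReal_mono hAfin hkey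
    rw [ENNReal.toReal_add (by
        exact ENNReal.mul_ne_top ENNReal.ofReal_ne_top hAfin) hBfin,
      ENNReal.toReal_mul, ENNReal.toReal_ofReal hCκpos.le] at hkeyR
    linarith
  set η : ℝ := (1 - C * κ)⁻¹ with hηdef
  have h1mpos : 0 < 1 - C * κ := by linarith
  have hη1 : 1 < η := (one_lt_inv₀ (by linarith)).mpr (by linarith)
  have hηpos : 0 < η := lt_trans one_pos hη1
  have hstep' : ∀ r : ℝ,
      η * (μ (Metric.ball o (r - κ₀))).toReal ≤ (μ (Metric.ball o r)).toReal := by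
    intro r
    have := hstep r
    have h2 : η * (μ (Metric.ball o (r - κ₀))).toReal ≤ η * ((1 - C * κ) * (μ (Metric.ball o r)).toReal) :=
      mul_le_mul_of_nonneg_left this hηpos.le
    have h3 : η * ((1 - C * κ) * (μ (Metric.ball o r)).toReal) = (μ (Metric.ball o r)).toReal := by
      rw [hηdef, ← mul_assoc, inv_mul_cancel₀ h1mpos.ne', one_mul]
    linarith
  -- a ball of positive measure
  have hex : ∃ n : ℕ, μ (Metric.ball o n) ≠ 0 := by
    by_contra h
    push_neg at h
    apply hpos
    rw [← Metric.iUnion_ball_nat o]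
    exact measure_iUnion_null h
  obtain ⟨N, hN⟩ := hex
  set m : ℝ := (μ (Metric.ball o N)).toReal with hmdef
  have hm : 0 < m := ENNReal.toReal_pos hN (hballs o N).ne
  -- induction
  have hind : ∀ n : ℕ, η ^ n * m ≤ (μ (Metric.ball o (N + n * κ₀))).toReal := by
    intro n
    induction n with
    | zero =>
      have h0 : (N : ℝ) + (0 : ℕ) * κ₀ = (N : ℝ) := by push_cast; ring
      rw [h0, pow_zero, one_mul]
    | succ n ih =>
      have heq : (N : ℝ) + (n + 1) * κ₀ - κ₀ = N + n * κ₀ := by ring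
      have := hstep' ((N : ℝ) + (n + 1) * κ₀)
      rw [heq] at this
      have h4 : η ^ (n + 1) * m = η * (η ^ n * m) := by ring
      have h5 : η * (η ^ n * m) ≤ η * (μ (Metric.ball o (N + n * κ₀))).toReal :=
        mul_le_mul_of_nonneg_left ih hηpos.le
      push_cast
      linarith
  refine ⟨η, hη1, m * η ^ (-((N : ℝ) / κ₀) - 1), by positivity, (N : ℝ), ?_⟩
  intro r hr
  set n : ℕ := ⌊(r - N) / κ₀⌋₊ with hndef
  have hnn : (0 : ℝ) ≤ (r - N) / κ₀ := by
    apply div_nonneg (by linarith) hκ₀.le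
  have hnle : (n : ℝ) ≤ (r - N) / κ₀ := Nat.floor_le hnn
  have hnlt : (r - N) / κ₀ < n + 1 := Nat.lt_floor_add_one _
  have hball_le : (N : ℝ) + n * κ₀ ≤ r := by
    have := (le_div_iff₀ hκ₀).mp hnle
    linarith
  have hmono : (μ (Metric.ball o (N + n * κ₀))).toReal ≤ (μ (Metric.ball o r)).toReal :=
    ENNReal.toReal_mono (hballs o r).ne (measure_mono (Metric.ball_subset_ball hball_le))
  have hpow : m * η ^ (-((N : ℝ) / κ₀) - 1) * η ^ (r / κ₀) ≤ η ^ n * m := by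
    have h6 : m * η ^ (-((N : ℝ) / κ₀) - 1) * η ^ (r / κ₀)
        = m * η ^ ((r - N) / κ₀ - 1) := by
      rw [mul_assoc, ← Real.rpow_add hηpos]
      congr 1
      congr 1
      field_simp
      ring
    rw [h6]
    have h7 : η ^ ((r - N) / κ₀ - 1) ≤ η ^ (n : ℝ) :=
      Real.rpow_le_rpow_of_exponent_le hη1.le (by linarith)
    rw [Real.rpow_natCast] at h7
    nlinarith
  apply ENNReal.ofReal_le_of_le_toReal
  calc m * η ^ (-((N : ℝ) / κ₀) - 1) * η ^ (r / κ₀) ≤ η ^ n * m := hpow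
    _ ≤ (μ (Metric.ball o (N + n * κ₀))).toReal := hind n
    _ ≤ (μ (Metric.ball o r)).toReal := hmono
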